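/- For k ≥ 2, the integer 2k-1 divides C(2k-1, k), but 2 does not divide C(2k-1, k) when k is a power of 2. -/

import Mathlib

lemma odd_choose_pow (s : ℕ) : ∀ m ≤ 2 ^ s - 1, (2 ^ s - 1).choose m % 2 = 1 := by
  induction s with
  | zero => intro m hm; interval_cases m <;> simp
  | succ s ih =>
    intro m hm
    haveI : Fact (Nat.Prime 2) := ⟨Nat.prime_two⟩
    have h := (Choose.choose_modEq_choose_mod_mul_choose_div_nat
      (p := 2) (n := 2 ^ (s+1) - 1) (k := m))
    have h1 : (2 ^ (s+1) - 1) % 2 = 1 := by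
      have : 2 ^ (s+1) - 1 = 2 * (2 ^ s - 1) + 1 := by
        have : 1 ≤ 2 ^ s := Nat.one_le_two_pow
        omega
      omega
    have h2 : (2 ^ (s+1) - 1) / 2 = 2 ^ s - 1 := by
      have : 1 ≤ 2 ^ s := Nat.one_le_two_pow
      omega
    rw [h1, h2] at h
    have h3 : Nat.choose 1 (m % 2) = 1 := by
      have : m % 2 < 2 := Nat.mod_lt _ (by norm_num)
      interval_cases (m % 2) <;> simp
    rw [h3, one_mul] at h
    have hm2 : m / 2 ≤ 2 ^ s - 1 := by
      have : 1 ≤ 2 ^ s := Nat.one_le_two_pow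
      have : 2 ^ (s+1) = 2 * 2 ^ s := by ring
      omega
    have := ih (m / 2) hm2
    unfold Nat.ModEq at h
    omega

theorem divisibility (k : ℕ) (hk : 2 ≤ k) :
    (2 * k - 1) ∣ (2 * k - 1).choose k ∧
    (∀ t : ℕ, 1 ≤ t → k = 2 ^ t → ¬ 2 ∣ (2 * k - 1).choose k) := by
  constructor
  · have key := Nat.add_one_mul_choose_eq (2 * k - 2) (k - 1)
    have e1 : (2 * k - 2).succ = 2 * k - 1 := by omega
    have e2 : (2 * k - 2) + 1 = 2 * k - 1 := by omega
    have e3 : (k - 1) + 1 = k := by omega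
    rw [e2, e3] at key
    have hcop : Nat.Coprime (2 * k - 1) k := by
      have h' : 2 * k - 1 = (k - 1) + k := by omega
      rw [h', Nat.coprime_add_self_left, show k = (k-1)+1 by omega]
      simp
    have hdvd : (2 * k - 1) ∣ (2 * k - 1).choose k * k := ⟨_, key.symm⟩
    exact (Nat.Coprime.dvd_of_dvd_mul_right hcop) hdvd
  · rintro t ht rfl
    have h : 2 * 2 ^ t - 1 = 2 ^ (t + 1) - 1 := by ring_nf
    rw [h]
    have := odd_choose_pow (t + 1) (2 ^ t) (by
      have : 2 ^ (t+1) = 2 * 2 ^ t := by ring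
      have : 1 ≤ 2 ^ t := Nat.one_le_two_pow
      omega)
    omega
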